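/- Let H be a densely defined closed linear operator on a complex Hilbert space 𝓗 and let J : 𝓗 → 𝓗 be a conjugation operator, i.e. an antilinear map satisfying ⟨Jφ, Jψ⟩ = ⟨ψ, φ⟩ and J∘J = id. If H* = J H J (J-self-adjointness), then the residual spectrum of H is empty; that is, for every λ ∈ ℂ, if H − λ is injective then the range of H − λ is dense in 𝓗. -/
import Mathlib


open scoped InnerProductSpace

/-- A densely defined closed J-self-adjoint operator on a complex
Hilbert space has empty residual spectrum: if `H - λ` is injective then its
range is dense. -/
theorem stmt0 {E : Type*} [NormedAddCommGroup E] [InnerProductSpace ℂ E]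
    [CompleteSpace E]
    (T : E →ₗ.[ℂ] E) (hdense : Dense (T.domain : Set E)) (hclosed : T.IsClosed)
    (J : E → E)
    (hJadd : ∀ x y, J (x + y) = J x + J y)
    (hJsmul : ∀ (a : ℂ) (x : E), J (a • x) = (starRingEnd ℂ a) • J x)
    (hJinv : ∀ x, J (J x) = x)
    (hJinner : ∀ x y, ⟪J x, J y⟫_ℂ = ⟪y, x⟫_ℂ)
    -- `H* = J H J` : the adjoint has domain `J⁻¹(dom H)` and acts as `J ∘ H ∘ J`
    (hdom : ∀ x, x ∈ T.adjoint.domain ↔ J x ∈ T.domain)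
    (hact : ∀ x (hx : x ∈ T.adjoint.domain),
      T.adjoint ⟨x, hx⟩ = J (T ⟨J x, (hdom x).mp hx⟩))
    (lam : ℂ)
    (hinj : ∀ x : T.domain, T x = lam • (x : E) → (x : E) = 0) :
    Dense (Set.range fun x : T.domain => T x - lam • (x : E)) := by
  -- the range as a submodule
  set g : T.domain →ₗ[ℂ] E :=
    { toFun := fun x => T x - lam • (x : E)
      map_add' := by
        intro x y
        simp only [LinearPMap.map_add, Submodule.coe_add, smul_add]
        abel
      map_smul' := by
        intro a x
        simp only [LinearPMap.map_smul, Submodule.coe_smul, smul_smul, smul_sub,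
          RingHom.id_apply, mul_comm] } with hg
  have hrange : (Set.range fun x : T.domain => T x - lam • (x : E))
      = (LinearMap.range g : Set E) := by
    ext y; simp [hg, LinearMap.mem_range, eq_comm]
  rw [hrange]
  rw [Submodule.dense_iff_topologicalClosure_eq_top,
    Submodule.topologicalClosure_eq_top_iff, Submodule.eq_bot_iff]
  intro ψ hψorth
  by_contra hψ0
  -- ψ is orthogonal to the range, hence in the adjoint domain
  have hinner : ∀ x : T.domain, ⟪(starRingEnd ℂ lam) • ψ, (x : E)⟫_ℂ = ⟪ψ, T x⟫_ℂ := by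
    intro x
    have h := hψorth (g x) (LinearMap.mem_range_self g x)
    -- h : ⟪g x, ψ⟫ = 0, i.e. ⟪T x - lam • x, ψ⟫ = 0
    have h2 : ⟪(T x : E) - lam • (x : E), ψ⟫_ℂ = 0 := h
    have h' : ⟪ψ, (T x : E) - lam • (x : E)⟫_ℂ = 0 := by
      rw [← inner_conj_symm, h2, map_zero]
    rw [inner_sub_right] at h'
    rw [sub_eq_zero.mp h', inner_smul_right, inner_smul_left, starRingEnd_self_apply]
  have hψdom : ψ ∈ T.adjoint.domain :=
    T.mem_adjoint_domain_of_exists ψ ⟨(starRingEnd ℂ lam) • ψ, hinner⟩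
  have hadj : T.adjoint ⟨ψ, hψdom⟩ = (starRingEnd ℂ lam) • ψ :=
    LinearPMap.adjoint_apply_eq hdense ⟨ψ, hψdom⟩ hinner
  have hJact := hact ψ hψdom
  rw [hadj] at hJact
  -- so T (J ψ) = lam • J ψ
  have hTJ : T ⟨J ψ, (hdom ψ).mp hψdom⟩ = lam • J ψ := by
    have := congrArg J hJact.symm
    rw [hJinv, hJsmul] at this
    simpa using this
  have hJψ0 : J ψ = 0 := hinj ⟨J ψ, (hdom ψ).mp hψdom⟩ hTJ
  have hJ0 : J (0 : E) = 0 := by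
    simpa using hJsmul 0 0
  exact hψ0 (by rw [← hJinv ψ, hJψ0, hJ0])
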